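/- Let (a_1, …, a_n) be a sequence of reals, and suppose there exists an even p ≤ n with Σ_{i=1}^p (−1)^{i−1} a_i > 0; let p be the smallest such index. Let j be the largest odd number j < p such that Σ_{i=1}^j (−1)^{i−1} a_i is minimal among odd indices less than p. Then (a_1, …, a_j) is a slice. -/

import Mathlib

/-- Condition (ASC): all even-length initial alternating sums are ≤ 0. -/
def ASC (l : List ℝ) : Prop :=
  ∀ k : ℕ, 1 ≤ k → 2 * k ≤ l.length → (l.take (2 * k)).alternatingSum ≤ 0

/-- A slice: odd length, and both the sequence and its reverse satisfy (ASC). -/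
def IsSlice (l : List ℝ) : Prop := Odd l.length ∧ ASC l ∧ ASC l.reverse

/-- An ev-sequence: even length, satisfying (ASC). -/
def IsEvSeq (l : List ℝ) : Prop := Even l.length ∧ ASC l

lemma take_reverse' (l : List ℝ) (t : ℕ) :
    l.reverse.take t = (l.drop (l.length - t)).reverse := by
  have := List.reverse_take (l := l.reverse) (i := t)
  simp at this
  apply List.reverse_injective
  rw [this, List.reverse_reverse]

/-- Step A of the algorithm: if p is the smallest even index with positive initial
alternating sum and j is the largest odd index < p minimizing the initial alternating
sum, then (a_1,…,a_j) is a slice. -/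
theorem algorithm_first_block_is_slice (a : List ℝ) (p j : ℕ)
    (hp : Even p) (hpn : p ≤ a.length) (hppos : 0 < (a.take p).alternatingSum)
    (hpmin : ∀ q : ℕ, Even q → q ≤ a.length → 0 < (a.take q).alternatingSum → p ≤ q)
    (hj : Odd j) (hjp : j < p)
    (hjmin : ∀ i : ℕ, Odd i → i < p →
      (a.take j).alternatingSum ≤ (a.take i).alternatingSum)
    (hjmax : ∀ i : ℕ, Odd i → i < p →
      (a.take i).alternatingSum = (a.take j).alternatingSum → i ≤ j) :
    IsSlice (a.take j) := by
  have hjn : j ≤ a.length := le_trans (le_of_lt hjp) hpn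
  have hlen : (a.take j).length = j := by simp [hjn]
  refine ⟨by rw [hlen]; exact hj, ?_, ?_⟩
  · -- ASC of a.take j
    intro k hk h2k
    rw [hlen] at h2k
    rw [List.take_take, min_eq_left h2k]
    by_contra hpos
    push_neg at hpos
    have := hpmin (2 * k) (even_two_mul k) (le_trans h2k hjn) hpos
    omega
  · -- ASC of reverse
    intro k hk h2k
    rw [List.length_reverse, hlen] at h2k
    set t := 2 * k with ht
    have htj : t ≤ j := h2k
    have htlt : t < j := by
      rcases hj with ⟨m, hm⟩
      omega
    rw [take_reverse', hlen]
    -- split a.take j into take (j - t) and drop (j - t)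
    have hsplit : a.take j = (a.take j).take (j - t) ++ (a.take j).drop (j - t) :=
      (List.take_append_drop _ _).symm
    have hts : ((a.take j).take (j - t)) = a.take (j - t) := by
      rw [List.take_take, min_eq_left (by omega)]
    have hlen2 : ((a.take j).take (j - t)).length = j - t := by
      rw [hts]; simp; omega
    have hA := List.alternatingSum_append ((a.take j).take (j - t)) ((a.take j).drop (j - t))
    rw [← hsplit, hlen2, hts] at hA
    have hR := List.alternatingSum_reverse ((a.take j).drop (j - t))
    have hlen3 : ((a.take j).drop (j - t)).length = t := by simp [hlen]; omega
    rw [hlen3] at hR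
    have hsgn : ((-1 : ℤ) ^ (t + 1)) = -1 := by
      rw [Odd.neg_one_pow]; exact ⟨k, by omega⟩
    have hsgn2 : ((-1 : ℤ) ^ (j - t)) = -1 := by
      rw [Odd.neg_one_pow]
      rcases hj with ⟨m, hm⟩
      exact ⟨m - k, by omega⟩
    rw [hsgn] at hR
    rw [hsgn2] at hA
    -- hA : (a.take j).alternatingSum = (a.take (j-t)).alternatingSum + (-1) • drop.alternatingSum
    have hodd : Odd (j - t) := by
      rcases hj with ⟨m, hm⟩; exact ⟨m - k, by omega⟩
    have hmin := hjmin (j - t) hodd (by omega)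
    rw [hR]
    simp only [neg_smul, one_smul] at hA ⊢
    linarith
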